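/- Let 1 ≤ n and k ≥ 1 with n + k ≤ g. Let v_1, …, v_n ∈ H satisfy gcd(v_1,…,v_n) = 1, and let D be a dual summand for v_1,…,v_n with basis u_1,…,u_n (so ω(v_i,u_j) = δ_{ij}). Let w_1, …, w_k ∈ H be given with gcd(v_1,…,v_n,w_1,…,w_k) = 1. Then there exist vectors u′_1, …, u′_{n+k} ∈ H spanning an isotropic direct summand D_2 of rank n + k which is a dual summand for the family (x_1,…,x_{n+k}) = (v_1,…,v_n,w_1,…,w_k) (i.e. ω(x_i,u′_j) = δ_{ij}), and such that span_ℤ(v_1,…,v_n) + D ⊆ span_ℤ(v_1,…,v_n,w_1,…,w_k) + D_2. -/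

import Mathlib

namespace Paper

/-- The standard symplectic form on `R^{2g}` with respect to the basis
`a_1, b_1, …, a_g, b_g` (coordinates `2i, 2i+1` for `a_{i+1}, b_{i+1}`). -/
def symp {R : Type*} [CommRing R] {g : ℕ} (x y : Fin (2 * g) → R) : R :=
  ∑ i : Fin g,
    (x ⟨2 * i.1, by omega⟩ * y ⟨2 * i.1 + 1, by omega⟩ -
      x ⟨2 * i.1 + 1, by omega⟩ * y ⟨2 * i.1, by omega⟩)

theorem symp_add_left {R : Type*} [CommRing R] {g : ℕ} (x y a : Fin (2 * g) → R) :
    symp (x + y) a = symp x a + symp y a := by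
  unfold symp
  rw [← Finset.sum_add_distrib]
  exact Finset.sum_congr rfl fun i _ => by simp only [Pi.add_apply]; ring

theorem symp_smul_left {R : Type*} [CommRing R] {g : ℕ} (c : R) (x a : Fin (2 * g) → R) :
    symp (c • x) a = c * symp x a := by
  unfold symp
  rw [Finset.mul_sum]
  exact Finset.sum_congr rfl fun i _ => by simp only [Pi.smul_apply, smul_eq_mul]; ring

theorem symp_zero_left {R : Type*} [CommRing R] {g : ℕ} (a : Fin (2 * g) → R) :
    symp (0 : Fin (2 * g) → R) a = 0 := by
  unfold symp; simp

/-- The orthogonal complement `A^⊥ = {x | ω(x,a) = 0 for all a ∈ A}`. -/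
def perp {R : Type*} [CommRing R] {g : ℕ} (A : Set (Fin (2 * g) → R)) :
    Submodule R (Fin (2 * g) → R) where
  carrier := {x | ∀ a ∈ A, symp x a = 0}
  add_mem' := by
    intro x y hx hy a ha
    rw [symp_add_left, hx a ha, hy a ha, add_zero]
  zero_mem' := by
    intro a ha
    exact symp_zero_left a
  smul_mem' := by
    intro c x hx a ha
    rw [symp_smul_left, hx a ha, mul_zero]

/-- The submodule of vectors whose first `m` coordinates vanish.
`H_k = coordZero R (2*g) (2*(k-1))`, and `H₂ = coordZero R (2*(g+1)) 2`. -/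
def coordZero (R : Type*) [CommRing R] (n m : ℕ) : Submodule R (Fin n → R) where
  carrier := {v | ∀ j : Fin n, (j : ℕ) < m → v j = 0}
  add_mem' := by
    intro x y hx hy j hj
    have h1 := hx j hj
    have h2 := hy j hj
    simp [Pi.add_apply, h1, h2]
  zero_mem' := by intro j hj; rfl
  smul_mem' := by
    intro c x hx j hj
    have h1 := hx j hj
    simp [Pi.smul_apply, h1]

/-- The standard basis vector `a_{i+1}` (`i` is 0-indexed). -/
def stdA (R : Type*) [CommRing R] (g i : ℕ) : Fin (2 * g) → R :=
  fun j => if (j : ℕ) = 2 * i then 1 else 0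

/-- The standard basis vector `b_{i+1}` (`i` is 0-indexed). -/
def stdB (R : Type*) [CommRing R] (g i : ℕ) : Fin (2 * g) → R :=
  fun j => if (j : ℕ) = 2 * i + 1 then 1 else 0

/-- Regard an integer vector as a rational vector. -/
def qcast {n : ℕ} (v : Fin n → ℤ) : Fin n → ℚ := fun j => (v j : ℚ)

/-- The projection `pr₂` deleting the `a_1`- and `b_1`-coordinates. -/
def pr2 {R : Type*} [CommRing R] {n : ℕ} (v : Fin n → R) : Fin n → R :=
  fun j => if (j : ℕ) < 2 then 0 else v j

/-- `gcd(v_1, …, v_m) = 1`: the vectors are linearly independent and their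
ℤ-span is a direct summand. -/
def IsUnimodular {n m : ℕ} (v : Fin m → Fin n → ℤ) : Prop :=
  LinearIndependent ℤ v ∧
    ∃ C : Submodule ℤ (Fin n → ℤ), IsCompl (Submodule.span ℤ (Set.range v)) C

/-- A primitive vector. -/
def Primitive {n : ℕ} (v : Fin n → ℤ) : Prop := IsUnimodular ![v]

/-- The entries of `w` are pairwise `ω`-orthogonal. -/
def PairwiseOrth {g m : ℕ} (w : Fin m → Fin (2 * g) → ℤ) : Prop :=
  ∀ i j, i ≠ j → symp (w i) (w j) = 0

/-- `Λ³ W`: the span of all wedges of three vectors from `W` inside the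
exterior algebra. -/
def wedge3 {g : ℕ} (W : Submodule ℚ (Fin (2 * g) → ℚ)) :
    Submodule ℚ (ExteriorAlgebra ℚ (Fin (2 * g) → ℚ)) :=
  Submodule.span ℚ {x | ∃ z₁ ∈ W, ∃ z₂ ∈ W, ∃ z₃ ∈ W,
    x = ExteriorAlgebra.ι ℚ z₁ * ExteriorAlgebra.ι ℚ z₂ * ExteriorAlgebra.ι ℚ z₃}

/-- `u ∧ Λ² W`. -/
def uWedge2 {g : ℕ} (u : Fin (2 * g) → ℚ) (W : Submodule ℚ (Fin (2 * g) → ℚ)) :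
    Submodule ℚ (ExteriorAlgebra ℚ (Fin (2 * g) → ℚ)) :=
  Submodule.span ℚ {x | ∃ z₁ ∈ W, ∃ z₂ ∈ W,
    x = ExteriorAlgebra.ι ℚ u * ExteriorAlgebra.ι ℚ z₁ * ExteriorAlgebra.ι ℚ z₂}

/-- `u ∧ u' ∧ W`. -/
def uuWedge1 {g : ℕ} (u u' : Fin (2 * g) → ℚ) (W : Submodule ℚ (Fin (2 * g) → ℚ)) :
    Submodule ℚ (ExteriorAlgebra ℚ (Fin (2 * g) → ℚ)) :=
  Submodule.span ℚ {x | ∃ z ∈ W,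
    x = ExteriorAlgebra.ι ℚ u * ExteriorAlgebra.ι ℚ u' * ExteriorAlgebra.ι ℚ z}

/-- The simplicial differential: on the summand indexed by `w` it sends `z` to
`Σ_j (-1)^j · z` placed in the summand indexed by `∂_j w`. -/
noncomputable def diff (g p : ℕ)
    (ξ : (Fin (p + 1) → Fin (2 * g) → ℤ) →₀ ExteriorAlgebra ℚ (Fin (2 * g) → ℚ)) :
    (Fin p → Fin (2 * g) → ℤ) →₀ ExteriorAlgebra ℚ (Fin (2 * g) → ℚ) :=
  ξ.sum fun w z =>
    ∑ j : Fin (p + 1), ((-1 : ℚ) ^ (j : ℕ)) • Finsupp.single (fun i => w (j.succAbove i)) z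

/-- The gcd of the determinants of all maximal square submatrices of the matrix
whose columns are the `v i`. -/
def vgcd {ι : Type*} [Fintype ι] {m : ℕ} (v : Fin m → ι → ℤ) : ℕ :=
  Finset.univ.gcd fun r : Fin m → ι => (Matrix.det (Matrix.of fun i j => v j (r i))).natAbs

-- new material
theorem symp_add_right {R : Type*} [CommRing R] {g : ℕ} (x a b : Fin (2 * g) → R) :
    symp x (a + b) = symp x a + symp x b := by
  unfold symp
  rw [← Finset.sum_add_distrib]
  exact Finset.sum_congr rfl fun i _ => by simp only [Pi.add_apply]; ring

theorem symp_smul_right {R : Type*} [CommRing R] {g : ℕ} (c : R) (x a : Fin (2 * g) → R) :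
    symp x (c • a) = c * symp x a := by
  unfold symp
  rw [Finset.mul_sum]
  exact Finset.sum_congr rfl fun i _ => by simp only [Pi.smul_apply, smul_eq_mul]; ring

theorem symp_self {R : Type*} [CommRing R] {g : ℕ} (x : Fin (2 * g) → R) :
    symp x x = 0 := by
  unfold symp; apply Finset.sum_eq_zero; intro i _; ring

theorem symp_antisymm {R : Type*} [CommRing R] {g : ℕ} (x y : Fin (2 * g) → R) :
    symp x y = - symp y x := by
  unfold symp
  rw [← Finset.sum_neg_distrib]
  exact Finset.sum_congr rfl fun i _ => by ring

/-- The symplectic form as a bilinear map over `ℤ`. -/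
def sympB {g : ℕ} : (Fin (2 * g) → ℤ) →ₗ[ℤ] (Fin (2 * g) → ℤ) →ₗ[ℤ] ℤ :=
  LinearMap.mk₂ ℤ symp symp_add_left (fun c x a => symp_smul_left c x a)
    symp_add_right (fun c x a => symp_smul_right c x a)

@[simp] theorem sympB_apply {g : ℕ} (x y : Fin (2 * g) → ℤ) : sympB x y = symp x y := rfl

def pairEquiv (g : ℕ) : Fin g × Fin 2 ≃ Fin (2 * g) where
  toFun p := ⟨2 * p.1.1 + p.2.1, by have := p.1.isLt; have := p.2.isLt; omega⟩
  invFun j := (⟨j.1 / 2, by have := j.isLt; omega⟩, ⟨j.1 % 2, by omega⟩)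
  left_inv p := by
    have := p.2.isLt
    ext <;> simp <;> omega
  right_inv j := by ext; simp; omega

theorem sum_pair {M : Type*} [AddCommMonoid M] {g : ℕ} (F : Fin (2 * g) → M) :
    ∑ j, F j = ∑ i : Fin g, (F ⟨2 * i.1, by omega⟩ + F ⟨2 * i.1 + 1, by omega⟩) := by
  rw [← Equiv.sum_comp (pairEquiv g) F, Fintype.sum_prod_type]
  apply Finset.sum_congr rfl
  intro i _
  rw [Fin.sum_univ_two]
  congr 1

/-- The inverse-symplectic twist of a coefficient vector: `symp z (Jvec c) = ∑ c j * z j`. -/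
def Jvec {g : ℕ} (c : Fin (2 * g) → ℤ) : Fin (2 * g) → ℤ :=
  fun j => if h : (j : ℕ) % 2 = 0 then - c ⟨j.1 + 1, by omega⟩ else c ⟨j.1 - 1, by omega⟩

theorem symp_Jvec {g : ℕ} (z c : Fin (2 * g) → ℤ) :
    symp z (Jvec c) = ∑ j, c j * z j := by
  rw [sum_pair (fun j => c j * z j)]
  unfold symp Jvec
  apply Finset.sum_congr rfl
  intro i _
  have h0 : (2 * i.1) % 2 = 0 := by omega
  have h1 : (2 * i.1 + 1) % 2 ≠ 0 := by omega
  rw [dif_pos h0, dif_neg h1]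
  have : 2 * i.1 + 1 - 1 = 2 * i.1 := by omega
  simp only [this]
  ring

/-- Any linear functional is represented by the symplectic form. -/
theorem exists_symp_eq {g : ℕ} (f : (Fin (2 * g) → ℤ) →ₗ[ℤ] ℤ) :
    ∃ y, ∀ z, symp z y = f z := by
  refine ⟨Jvec (fun j => f fun i => if j = i then 1 else 0), fun z => ?_⟩
  rw [symp_Jvec, LinearMap.pi_apply_eq_sum_univ f z]
  exact Finset.sum_congr rfl fun i _ => by rw [smul_eq_mul, mul_comm]



/-- A family admitting a dual family is unimodular. -/
theorem isUnimodular_of_dual {g m : ℕ} (x y : Fin m → Fin (2 * g) → ℤ)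
    (h : ∀ i j, symp (x i) (y j) = if i = j then 1 else 0) :
    IsUnimodular x := by
  classical
  -- the pairing map z ↦ (symp z (y j))_j
  let ψ : (Fin (2 * g) → ℤ) →ₗ[ℤ] (Fin m → ℤ) :=
    LinearMap.pi (fun j => (sympB.flip (y j)))
  have hψx : ∀ i, ψ (x i) = fun j => if i = j then 1 else 0 := by
    intro i; funext j; simp [ψ, LinearMap.pi_apply, h i j]
  have key : ∀ c : Fin m → ℤ, ψ (∑ i, c i • x i) = c := by
    intro c
    rw [map_sum]
    funext j
    simp only [map_smul, Finset.sum_apply, Pi.smul_apply, hψx, smul_eq_mul]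
    simp [Finset.sum_ite_eq', mul_ite]
  have hli : LinearIndependent ℤ x := by
    rw [Fintype.linearIndependent_iff]
    intro c hc i
    have := key c
    rw [hc, map_zero] at this
    exact (congrFun this.symm i)
  refine ⟨hli, LinearMap.ker ψ, ?_⟩
  constructor
  · rw [disjoint_iff_inf_le]
    rintro z ⟨hz1, hz2⟩
    obtain ⟨c, rfl⟩ := (Submodule.mem_span_range_iff_exists_fun ℤ).1 hz1
    have : c = 0 := by rw [← key c]; exact hz2
    simp [this]
  · rw [codisjoint_iff_le_sup]
    intro z _
    have hzdec : z = (∑ i, (ψ z) i • x i) + (z - ∑ i, (ψ z) i • x i) := by abel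
    rw [hzdec]
    apply Submodule.add_mem_sup
    · exact Submodule.sum_mem _ fun i _ =>
        Submodule.smul_mem _ _ (Submodule.subset_span ⟨i, rfl⟩)
    · simp only [LinearMap.mem_ker, map_sub, key]
      abel

/-- A unimodular family admits a dual family. -/
theorem IsUnimodular.exists_dual {g m : ℕ} {x : Fin m → Fin (2 * g) → ℤ}
    (hx : IsUnimodular x) :
    ∃ y : Fin m → Fin (2 * g) → ℤ, ∀ i j, symp (x i) (y j) = if i = j then 1 else 0 := by
  classical
  obtain ⟨hli, C, hC⟩ := hx
  set X := Submodule.span ℤ (Set.range x)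
  let π : (Fin (2 * g) → ℤ) →ₗ[ℤ] X := X.linearProjOfIsCompl C hC
  let b : Module.Basis (Fin m) ℤ X := Module.Basis.span hli
  have hyj : ∀ j : Fin m, ∃ yj, ∀ z, symp z yj = (b.coord j) (π z) := by
    intro j
    exact exists_symp_eq ((b.coord j).comp π)
  choose y hy using hyj
  refine ⟨y, fun i j => ?_⟩
  rw [hy j (x i)]
  have hximem : x i ∈ X := Submodule.subset_span ⟨i, rfl⟩
  have hπ : π (x i) = ⟨x i, hximem⟩ := X.linearProjOfIsCompl_apply_left hC ⟨x i, hximem⟩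
  rw [hπ]
  have hbi : b i = ⟨x i, hximem⟩ := Module.Basis.span_apply hli i
  rw [← hbi, Module.Basis.coord_apply, b.repr_self]
  simp [Finsupp.single_apply]

/-- A subfamily of a unimodular family is unimodular. -/
theorem IsUnimodular.comp {g m m' : ℕ} {x : Fin m → Fin (2 * g) → ℤ}
    (hx : IsUnimodular x) (f : Fin m' → Fin m) (hf : Function.Injective f) :
    IsUnimodular (x ∘ f) := by
  obtain ⟨y, hy⟩ := hx.exists_dual
  apply isUnimodular_of_dual (x ∘ f) (y ∘ f)
  intro i j
  simp only [Function.comp_apply, hy (f i) (f j)]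
  by_cases hij : i = j
  · simp [hij]
  · rw [if_neg (fun hfij => hij (hf hfij)), if_neg hij]

theorem gcd_mem_span {ι : Type*} [DecidableEq ι] (s : Finset ι) (f : ι → ℤ) :
    (s.gcd f) ∈ Submodule.span ℤ (f '' ↑s) := by
  induction s using Finset.induction with
  | empty => simp
  | @insert a s ha ih =>
    rw [Finset.gcd_insert, ← Int.coe_gcd, Int.gcd_eq_gcd_ab (f a) (s.gcd f)]
    apply Submodule.add_mem
    · rw [mul_comm, ← smul_eq_mul]
      exact Submodule.smul_mem _ _ (Submodule.subset_span ⟨a, Finset.mem_insert_self a s, rfl⟩)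
    · rw [mul_comm, ← smul_eq_mul]
      apply Submodule.smul_mem
      refine Submodule.span_mono ?_ (ih)
      exact Set.image_mono (by simp)

/-- Bezout: if the coordinate gcd of `t₀` is 1 then some integer combination
of the coordinates equals 1. -/
theorem exists_bezout {N : ℕ} (t₀ : Fin N → ℤ) (h : Finset.univ.gcd t₀ = 1) :
    ∃ c : Fin N → ℤ, ∑ j, c j * t₀ j = 1 := by
  have h1 : (1 : ℤ) ∈ Submodule.span ℤ (Set.range t₀) := by
    have := gcd_mem_span Finset.univ t₀
    rw [h] at this
    simpa using this
  obtain ⟨c, hc⟩ := (Submodule.mem_span_range_iff_exists_fun ℤ).1 h1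
  exact ⟨c, by simpa [smul_eq_mul] using hc⟩

/-- Primitive part: a nonzero integer vector is `d • t₀` with the coordinates of
`t₀` admitting an integer combination equal to 1. -/
theorem exists_primitive_part {N : ℕ} (t : Fin N → ℤ) (ht : t ≠ 0) :
    ∃ (d : ℤ) (t₀ c : Fin N → ℤ), t = d • t₀ ∧ ∑ j, c j * t₀ j = 1 := by
  have hN : (Finset.univ : Finset (Fin N)).Nonempty := by
    rcases Nat.eq_zero_or_pos N with h0 | h0
    · exfalso; apply ht; funext j; exact absurd j.isLt (by omega)
    · exact ⟨⟨0, h0⟩, Finset.mem_univ _⟩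
  obtain ⟨t₀, hfac, hgcd⟩ := Finset.extract_gcd t hN
  obtain ⟨c, hc⟩ := exists_bezout t₀ hgcd
  exact ⟨Finset.univ.gcd t, t₀, c, funext fun j => by
    simpa [smul_eq_mul] using hfac j (Finset.mem_univ j), hc⟩

section Proj

variable {g n : ℕ}

/-- Projection of `z` onto the orthogonal complement of `span(v, u)`. -/
def piM (v u : Fin n → Fin (2 * g) → ℤ) (z : Fin (2 * g) → ℤ) : Fin (2 * g) → ℤ :=
  z - (∑ i, (- symp (u i) z) • v i) - (∑ i,
    (symp (v i) z - ∑ s, (- symp (u s) z) * symp (v i) (v s)) • u i)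

theorem symp_v_piM (v u : Fin n → Fin (2 * g) → ℤ)
    (hdual : ∀ i j, symp (v i) (u j) = if i = j then 1 else 0)
    (z : Fin (2 * g) → ℤ) (i : Fin n) : symp (v i) (piM v u z) = 0 := by
  show sympB (v i) (piM v u z) = 0
  unfold piM
  simp only [map_sub, map_sum, map_smul, smul_eq_mul, sympB_apply]
  simp only [hdual, mul_ite, mul_one, mul_zero, Finset.sum_ite_eq, Finset.mem_univ, if_true]
  ring

theorem symp_u_piM (v u : Fin n → Fin (2 * g) → ℤ)
    (hdual : ∀ i j, symp (v i) (u j) = if i = j then 1 else 0)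
    (huiso : ∀ i j, symp (u i) (u j) = 0)
    (z : Fin (2 * g) → ℤ) (i : Fin n) : symp (u i) (piM v u z) = 0 := by
  have husymp : ∀ i j, symp (u i) (v j) = if i = j then (-1 : ℤ) else 0 := by
    intro i j
    rw [symp_antisymm, hdual j i]
    by_cases h : i = j <;> simp [h, eq_comm]
  show sympB (u i) (piM v u z) = 0
  unfold piM
  simp only [map_sub, map_sum, map_smul, smul_eq_mul, sympB_apply]
  simp only [husymp, huiso, mul_ite, mul_neg_one, mul_zero, Finset.sum_ite_eq,
    Finset.mem_univ, if_true, Finset.sum_const_zero]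
  ring

/-- Existence of a suitable "hyperbolic pair" in the orthogonal complement,
together with a factorization of a given orthogonal vector `t`. -/
theorem exists_hyp_pair (v u : Fin n → Fin (2 * g) → ℤ)
    (hdual : ∀ i j, symp (v i) (u j) = if i = j then 1 else 0)
    (huiso : ∀ i j, symp (u i) (u j) = 0)
    (hg : n + 1 ≤ g) (t : Fin (2 * g) → ℤ)
    (htv : ∀ i, symp (v i) t = 0) (htu : ∀ i, symp (u i) t = 0) :
    ∃ (d : ℤ) (t₀ y₀ : Fin (2 * g) → ℤ), t = d • t₀ ∧
      (∀ i, symp (v i) t₀ = 0) ∧ (∀ i, symp (u i) t₀ = 0) ∧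
      (∀ i, symp (v i) y₀ = 0) ∧ (∀ i, symp (u i) y₀ = 0) ∧
      symp t₀ y₀ = 1 := by
  classical
  obtain ⟨t', d', ht', ht'v, ht'u, htt'⟩ :
      ∃ (t' : Fin (2 * g) → ℤ) (d' : ℤ), t' ≠ 0 ∧ (∀ i, symp (v i) t' = 0) ∧
        (∀ i, symp (u i) t' = 0) ∧ t = d' • t' := by
    by_cases h0 : t = 0
    · have hex : ∃ j : Fin (2 * g), piM v u (Pi.single j 1) ≠ 0 := by
        by_contra hall
        push_neg at hall
        have hsingle : ∀ j : Fin (2 * g), (Pi.single j 1 : Fin (2 * g) → ℤ) ∈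
            Submodule.span ℤ (Set.range (Fin.append v u)) := by
          intro j
          have hz := hall j
          unfold piM at hz
          rw [sub_sub, sub_eq_zero] at hz
          rw [hz]
          apply Submodule.add_mem
          · exact Submodule.sum_mem _ fun i _ => Submodule.smul_mem _ _
              (Submodule.subset_span ⟨Fin.castAdd n i, Fin.append_left v u i⟩)
          · exact Submodule.sum_mem _ fun i _ => Submodule.smul_mem _ _
              (Submodule.subset_span ⟨Fin.natAdd n i, Fin.append_right v u i⟩)
        have htop : Submodule.span ℤ (Set.range (Fin.append v u)) = ⊤ := by
          rw [eq_top_iff]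
          intro z _
          rw [← Finset.univ_sum_single z]
          apply Submodule.sum_mem
          intro j _
          have hzz : (Pi.single j (z j) : Fin (2 * g) → ℤ) = z j • Pi.single j 1 := by
            funext k
            by_cases hk : k = j <;> simp [Pi.single_apply, hk]
          rw [hzz]
          exact Submodule.smul_mem _ _ (hsingle j)
        have h1 : Module.finrank ℤ (Submodule.span ℤ (Set.range (Fin.append v u))) ≤ 2 * n := by
          calc Module.finrank ℤ (Submodule.span ℤ (Set.range (Fin.append v u)))
              ≤ (Set.range (Fin.append v u)).toFinset.card := finrank_span_le_card _
            _ ≤ 2 * n := by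
                rw [Set.toFinset_range]
                calc (Finset.image (Fin.append v u) Finset.univ).card
                    ≤ (Finset.univ : Finset (Fin (n + n))).card := Finset.card_image_le
                  _ = n + n := by simp
                  _ ≤ 2 * n := by omega
        rw [htop, finrank_top, Module.finrank_fintype_fun_eq_card] at h1
        simp only [Fintype.card_fin] at h1
        omega
      obtain ⟨j, hj⟩ := hex
      exact ⟨piM v u (Pi.single j 1), 0, hj, symp_v_piM v u hdual _,
        symp_u_piM v u hdual huiso _, by rw [h0, zero_smul]⟩
    · exact ⟨t, 1, h0, htv, htu, by rw [one_smul]⟩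
  obtain ⟨e, t₀, c, hfac, hbez⟩ := exists_primitive_part t' ht'
  have he : e ≠ 0 := by
    rintro rfl
    rw [zero_smul] at hfac
    exact ht' hfac
  have ht₀v : ∀ i, symp (v i) t₀ = 0 := by
    intro i
    have h2 : symp (v i) t' = e * symp (v i) t₀ := by
      rw [hfac]; exact symp_smul_right e _ t₀
    rw [ht'v i] at h2
    rcases mul_eq_zero.mp h2.symm with h | h
    · exact absurd h he
    · exact h
  have ht₀u : ∀ i, symp (u i) t₀ = 0 := by
    intro i
    have h2 : symp (u i) t' = e * symp (u i) t₀ := by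
      rw [hfac]; exact symp_smul_right e _ t₀
    rw [ht'u i] at h2
    rcases mul_eq_zero.mp h2.symm with h | h
    · exact absurd h he
    · exact h
  refine ⟨d' * e, t₀, piM v u (Jvec c), ?_, ht₀v, ht₀u,
    symp_v_piM v u hdual _, symp_u_piM v u hdual huiso _, ?_⟩
  · rw [htt', hfac, smul_smul]
  · have h1 : symp t₀ (Jvec c) = 1 := by rw [symp_Jvec]; exact hbez
    have hv0 : ∀ s, symp t₀ (v s) = 0 := fun s => by
      rw [symp_antisymm, ht₀v s, neg_zero]
    have hu0 : ∀ s, symp t₀ (u s) = 0 := fun s => by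
      rw [symp_antisymm, ht₀u s, neg_zero]
    show sympB t₀ (piM v u (Jvec c)) = 1
    unfold piM
    simp only [map_sub, map_sum, map_smul, smul_eq_mul, sympB_apply]
    simp only [hv0, hu0, mul_zero, Finset.sum_const_zero, sub_zero, h1]

end Proj

theorem symp_neg_right {g : ℕ} (x y : Fin (2 * g) → ℤ) : symp x (-y) = - symp x y := by
  have h := symp_smul_right (-1 : ℤ) x y
  rw [neg_one_smul] at h
  rw [h]; ring

/-- The key step: extending a dual summand by one vector. -/
theorem stmt5_one (g n : ℕ) (hg : n + 1 ≤ g)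
    (v u : Fin n → Fin (2 * g) → ℤ)
    (huiso : ∀ i j, symp (u i) (u j) = 0)
    (hdual : ∀ i j, symp (v i) (u j) = if i = j then 1 else 0)
    (w₀ : Fin (2 * g) → ℤ)
    (hvw : IsUnimodular (Fin.snoc v w₀ : Fin (n + 1) → Fin (2 * g) → ℤ)) :
    ∃ u' : Fin (n + 1) → Fin (2 * g) → ℤ,
      IsUnimodular u' ∧ (∀ i j, symp (u' i) (u' j) = 0) ∧
      (∀ i j, symp ((Fin.snoc v w₀ : Fin (n + 1) → Fin (2 * g) → ℤ) i) (u' j) = if i = j then 1 else 0) ∧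
      Submodule.span ℤ (Set.range v) ⊔ Submodule.span ℤ (Set.range u) ≤
        Submodule.span ℤ (Set.range (Fin.snoc v w₀ : Fin (n + 1) → Fin (2 * g) → ℤ)) ⊔
          Submodule.span ℤ (Set.range u') := by
  classical
  have husymp : ∀ i j, symp (u i) (v j) = if i = j then (-1 : ℤ) else 0 := by
    intro i j
    rw [symp_antisymm, hdual j i]
    by_cases h : i = j <;> simp [h, eq_comm]
  -- dual vector for w₀ relative to v
  obtain ⟨y, hy⟩ := hvw.exists_dual
  have hydv : ∀ i, symp (v i) (y (Fin.last n)) = 0 := by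
    intro i
    have h := hy (Fin.castSucc i) (Fin.last n)
    rw [Fin.snoc_castSucc] at h
    rw [h, if_neg (Fin.castSucc_lt_last i).ne]
  have hydw : symp w₀ (y (Fin.last n)) = 1 := by
    have h := hy (Fin.last n) (Fin.last n)
    rw [Fin.snoc_last] at h
    rw [h, if_pos rfl]
  obtain ⟨yd, hyd⟩ : ∃ yd : Fin (2 * g) → ℤ, yd = y (Fin.last n) := ⟨_, rfl⟩
  rw [← hyd] at hydv hydw
  -- coefficients of w₀ over (v, u) and the orthogonal part t
  obtain ⟨a, ha⟩ : ∃ a : Fin n → ℤ, a = fun i => - symp (u i) w₀ := ⟨_, rfl⟩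
  obtain ⟨b, hb⟩ : ∃ b : Fin n → ℤ, b = fun i => symp (v i) w₀ - ∑ s, a s * symp (v i) (v s) := ⟨_, rfl⟩
  obtain ⟨t, htdefn⟩ : ∃ t : Fin (2 * g) → ℤ, t = piM v u w₀ := ⟨_, rfl⟩
  have htv : ∀ i, symp (v i) t = 0 := fun i => by
    rw [htdefn]; exact symp_v_piM v u hdual w₀ i
  have htu : ∀ i, symp (u i) t = 0 := fun i => by
    rw [htdefn]; exact symp_u_piM v u hdual huiso w₀ i
  have ht_def : t = w₀ - (∑ i, a i • v i) - (∑ i, b i • u i) := by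
    rw [htdefn]; unfold piM; simp only [ha, hb]
  obtain ⟨d, t₀, y₀, htfac, ht₀v, ht₀u, hy₀v, hy₀u, ht₀y₀⟩ :=
    exists_hyp_pair v u hdual huiso hg t htv htu
  have hw₀ : w₀ = (∑ i, a i • v i) + (∑ i, b i • u i) + d • t₀ := by
    rw [← htfac, ht_def]; abel
  -- reversed versions
  have hvt₀ : ∀ i, symp t₀ (v i) = 0 := fun i => by rw [symp_antisymm, ht₀v i, neg_zero]
  have hut₀ : ∀ i, symp t₀ (u i) = 0 := fun i => by rw [symp_antisymm, ht₀u i, neg_zero]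
  have hvy₀ : ∀ i, symp y₀ (v i) = 0 := fun i => by rw [symp_antisymm, hy₀v i, neg_zero]
  have huy₀ : ∀ i, symp y₀ (u i) = 0 := fun i => by rw [symp_antisymm, hy₀u i, neg_zero]
  have huy₀' : ∀ i, symp (u i) y₀ = 0 := fun i => by rw [symp_antisymm, huy₀ i, neg_zero]
  have hy₀t₀ : symp y₀ t₀ = -1 := by rw [symp_antisymm, ht₀y₀]
  have ht₀t₀ : symp t₀ t₀ = 0 := symp_self t₀
  have hy₀y₀ : symp y₀ y₀ = 0 := symp_self y₀
  -- Bezout data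
  obtain ⟨lam, hlam⟩ : ∃ lam : Fin n → ℤ, lam = fun i => symp (u i) yd := ⟨_, rfl⟩
  obtain ⟨mu, hmu⟩ : ∃ mu : ℤ, mu = symp t₀ (piM v u yd) := ⟨_, rfl⟩
  have hbez : (∑ i, b i * lam i) + mu * d = 1 := by
    have h1 : symp t yd = 1 - ∑ i, b i * lam i := by
      rw [ht_def]
      show sympB (w₀ - (∑ i, a i • v i) - (∑ i, b i • u i)) yd = _
      simp only [map_sub, map_sum, map_smul, LinearMap.sub_apply, LinearMap.sum_apply,
        LinearMap.smul_apply, smul_eq_mul, sympB_apply]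
      simp only [hydw, hydv, mul_zero, Finset.sum_const_zero]
      simp only [hlam]
      ring
    have h2 : symp t (piM v u yd) = symp t yd := by
      have htv' : ∀ i, symp t (v i) = 0 := fun i => by rw [symp_antisymm, htv i, neg_zero]
      have htu' : ∀ i, symp t (u i) = 0 := fun i => by rw [symp_antisymm, htu i, neg_zero]
      show sympB t (piM v u yd) = sympB t yd
      unfold piM
      simp only [map_sub, map_sum, map_smul, smul_eq_mul, sympB_apply]
      simp only [htv', htu', mul_zero, Finset.sum_const_zero, sub_zero]
    have h3 : symp t (piM v u yd) = d * mu := by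
      rw [htfac, symp_smul_left, hmu]
    rw [h2, h1] at h3
    linarith
  -- the new vectors
  obtain ⟨Pl, hPl⟩ : ∃ Pl : Fin n → ℤ, Pl = fun s => ∑ r, lam r * symp (v s) (v r) := ⟨_, rfl⟩
  obtain ⟨U, hU⟩ : ∃ U : Fin (2 * g) → ℤ,
    U = mu • y₀ + t₀ - (∑ s, lam s • v s) + (∑ s, Pl s • u s) := ⟨_, rfl⟩
  obtain ⟨A, hA⟩ : ∃ A : Fin n → ℤ, A = fun j => a j + d * lam j := ⟨_, rfl⟩
  obtain ⟨up, hup⟩ : ∃ up : Fin n → Fin (2 * g) → ℤ, up = fun j => u j + lam j • y₀ - A j • U := ⟨_, rfl⟩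
  have hupj : ∀ j, up j = u j + lam j • y₀ - A j • U := fun j => by simp only [hup]
  -- pairings with U
  have hvU : ∀ i, symp (v i) U = 0 := by
    intro i
    show sympB (v i) U = 0
    rw [hU]
    simp only [map_add, map_sub, map_sum, map_smul, smul_eq_mul, sympB_apply]
    simp only [hy₀v, ht₀v, hdual, mul_ite, mul_one, mul_zero, Finset.sum_ite_eq,
      Finset.mem_univ, if_true, Finset.sum_const_zero]
    simp only [hPl]
    rw [Finset.sum_congr rfl fun (s : Fin n) _ => mul_comm (lam s) (symp (v i) (v s))]
    ring
  have huU : ∀ i, symp (u i) U = lam i := by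
    intro i
    show sympB (u i) U = lam i
    rw [hU]
    simp only [map_add, map_sub, map_sum, map_smul, smul_eq_mul, sympB_apply]
    simp only [huy₀', husymp, huiso, mul_ite, mul_neg_one, mul_zero,
      Finset.sum_ite_eq, Finset.mem_univ, if_true, Finset.sum_const_zero]
    have h1 : symp (u i) t₀ = 0 := by rw [symp_antisymm, hut₀ i, neg_zero]
    rw [h1]
    ring
  have ht₀U : symp t₀ U = mu := by
    show sympB t₀ U = mu
    rw [hU]
    simp only [map_add, map_sub, map_sum, map_smul, smul_eq_mul, sympB_apply]
    simp only [ht₀y₀, ht₀t₀, hvt₀, hut₀, mul_zero, mul_one, Finset.sum_const_zero]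
    ring
  have hy₀U : symp y₀ U = -1 := by
    show sympB y₀ U = -1
    rw [hU]
    simp only [map_add, map_sub, map_sum, map_smul, smul_eq_mul, sympB_apply]
    simp only [hy₀y₀, hy₀t₀, hvy₀, huy₀, mul_zero, mul_one, Finset.sum_const_zero]
    ring
  have hUU : symp U U = 0 := symp_self U
  have hUy₀ : symp U y₀ = 1 := by rw [symp_antisymm, hy₀U]; ring
  have hUu : ∀ j, symp U (u j) = - lam j := fun j => by rw [symp_antisymm, huU j]
  have hwy₀ : symp w₀ y₀ = d := by
    rw [hw₀]
    show sympB ((∑ i, a i • v i) + (∑ i, b i • u i) + d • t₀) y₀ = d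
    simp only [map_add, map_sum, map_smul, LinearMap.add_apply, LinearMap.sum_apply,
      LinearMap.smul_apply, smul_eq_mul, sympB_apply]
    simp only [hy₀v, hy₀u, ht₀y₀, mul_zero, mul_one, Finset.sum_const_zero]
    ring
  have hwu : ∀ j, symp w₀ (u j) = a j := by
    intro j
    rw [hw₀]
    show sympB ((∑ i, a i • v i) + (∑ i, b i • u i) + d • t₀) (u j) = a j
    simp only [map_add, map_sum, map_smul, LinearMap.add_apply, LinearMap.sum_apply,
      LinearMap.smul_apply, smul_eq_mul, sympB_apply]
    simp only [hdual, huiso, hut₀, mul_ite, mul_one, mul_zero, Finset.sum_ite_eq',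
      Finset.mem_univ, if_true, Finset.sum_const_zero]
    ring
  have hwU : symp w₀ U = 1 := by
    rw [hw₀]
    show sympB ((∑ i, a i • v i) + (∑ i, b i • u i) + d • t₀) U = 1
    simp only [map_add, map_sum, map_smul, LinearMap.add_apply, LinearMap.sum_apply,
      LinearMap.smul_apply, smul_eq_mul, sympB_apply]
    simp only [hvU, huU, ht₀U, mul_zero, Finset.sum_const_zero]
    rw [zero_add]
    linarith [hbez]
  have hwup : ∀ j, symp w₀ (up j) = 0 := by
    intro j
    rw [hupj j]
    show sympB w₀ (u j + lam j • y₀ - A j • U) = 0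
    simp only [map_add, map_sub, map_smul, smul_eq_mul, sympB_apply]
    rw [hwu j, hwy₀, hwU]
    simp only [hA]
    ring
  have hvup : ∀ i j, symp (v i) (up j) = if i = j then 1 else 0 := by
    intro i j
    rw [hupj j]
    show sympB (v i) (u j + lam j • y₀ - A j • U) = _
    simp only [map_add, map_sub, map_smul, smul_eq_mul, sympB_apply]
    rw [hdual i j, hy₀v i, hvU i]
    ring
  have hupU : ∀ i, symp (up i) U = 0 := by
    intro i
    rw [hupj i]
    show sympB (u i + lam i • y₀ - A i • U) U = 0
    simp only [map_add, map_sub, map_smul, LinearMap.add_apply, LinearMap.sub_apply,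
      LinearMap.smul_apply, smul_eq_mul, sympB_apply]
    rw [huU i, hy₀U, hUU]
    ring
  have hUup : ∀ j, symp U (up j) = 0 := fun j => by
    rw [symp_antisymm, hupU j, neg_zero]
  have hupup : ∀ i j, symp (up i) (up j) = 0 := by
    intro i j
    rw [hupj i, hupj j]
    show sympB (u i + lam i • y₀ - A i • U) (u j + lam j • y₀ - A j • U) = 0
    simp only [map_add, map_sub, map_smul, LinearMap.add_apply, LinearMap.sub_apply,
      LinearMap.smul_apply, smul_eq_mul, sympB_apply]
    rw [huiso i j, huy₀' i, huU i, huy₀ j, hy₀y₀, hy₀U, hUu j, hUy₀, hUU]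
    ring
  -- the pairing of the extended families
  have hpair : ∀ i j, symp ((Fin.snoc v w₀ : Fin (n + 1) → Fin (2 * g) → ℤ) i)
      ((Fin.snoc up U : Fin (n + 1) → Fin (2 * g) → ℤ) j) = if i = j then 1 else 0 := by
    intro i j
    rcases Fin.eq_castSucc_or_eq_last i with ⟨i0, rfl⟩ | rfl <;>
      rcases Fin.eq_castSucc_or_eq_last j with ⟨j0, rfl⟩ | rfl
    · rw [Fin.snoc_castSucc, Fin.snoc_castSucc, hvup i0 j0]
      simp [Fin.castSucc_inj]
    · rw [Fin.snoc_castSucc, Fin.snoc_last, hvU i0, if_neg (Fin.castSucc_lt_last i0).ne]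
    · rw [Fin.snoc_last, Fin.snoc_castSucc, hwup j0, if_neg (Fin.castSucc_lt_last j0).ne']
    · rw [Fin.snoc_last, Fin.snoc_last, hwU, if_pos rfl]
  have hiso : ∀ i j, symp ((Fin.snoc up U : Fin (n + 1) → Fin (2 * g) → ℤ) i)
      ((Fin.snoc up U : Fin (n + 1) → Fin (2 * g) → ℤ) j) = 0 := by
    intro i j
    rcases Fin.eq_castSucc_or_eq_last i with ⟨i0, rfl⟩ | rfl <;>
      rcases Fin.eq_castSucc_or_eq_last j with ⟨j0, rfl⟩ | rfl
    · rw [Fin.snoc_castSucc, Fin.snoc_castSucc]; exact hupup i0 j0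
    · rw [Fin.snoc_castSucc, Fin.snoc_last]; exact hupU i0
    · rw [Fin.snoc_last, Fin.snoc_castSucc]; exact hUup j0
    · simp only [Fin.snoc_last]; exact hUU
  refine ⟨Fin.snoc up U, ?_, hiso, hpair, ?_⟩
  · -- unimodularity via the dual family -(snoc v w₀)
    apply isUnimodular_of_dual (Fin.snoc up U)
      (fun j => - (Fin.snoc v w₀ : Fin (n + 1) → Fin (2 * g) → ℤ) j)
    intro i j
    rw [symp_neg_right, symp_antisymm, neg_neg, hpair j i]
    by_cases h : i = j <;> simp [h, eq_comm]
  · -- the span condition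
    set T := Submodule.span ℤ (Set.range (Fin.snoc v w₀ : Fin (n + 1) → Fin (2 * g) → ℤ)) ⊔
      Submodule.span ℤ (Set.range (Fin.snoc up U : Fin (n + 1) → Fin (2 * g) → ℤ)) with hT
    have hvT : ∀ i, v i ∈ T := fun i => Submodule.mem_sup_left
      (Submodule.subset_span ⟨Fin.castSucc i, Fin.snoc_castSucc ..⟩)
    have hwT : w₀ ∈ T := Submodule.mem_sup_left
      (Submodule.subset_span ⟨Fin.last n, Fin.snoc_last ..⟩)
    have hupT : ∀ j, up j ∈ T := fun j => Submodule.mem_sup_right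
      (Submodule.subset_span ⟨Fin.castSucc j, Fin.snoc_castSucc ..⟩)
    have hUT : U ∈ T := Submodule.mem_sup_right
      (Submodule.subset_span ⟨Fin.last n, Fin.snoc_last ..⟩)
    have h1 : ∀ j, u j + lam j • y₀ ∈ T := by
      intro j
      have e : u j + lam j • y₀ = up j + A j • U := by rw [hupj j]; abel
      rw [e]
      exact Submodule.add_mem _ (hupT j) (Submodule.smul_mem _ _ hUT)
    have hPllam : (∑ s, Pl s * lam s) = 0 := by
      have e1 : (∑ s, Pl s * lam s) = ∑ s, ∑ r, lam r * symp (v s) (v r) * lam s := by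
        simp only [hPl, Finset.sum_mul]
      have e2 : (∑ s, ∑ r, lam r * symp (v s) (v r) * lam s)
          = ∑ s, ∑ r, -(lam s * symp (v r) (v s) * lam r) := by
        refine Finset.sum_congr rfl fun s _ => Finset.sum_congr rfl fun r _ => ?_
        rw [symp_antisymm (v s) (v r)]; ring
      have e3 : (∑ s : Fin n, ∑ r, -(lam s * symp (v r) (v s) * lam r))
          = - ∑ s : Fin n, ∑ r, lam s * symp (v r) (v s) * lam r := by
        rw [← Finset.sum_neg_distrib]
        exact Finset.sum_congr rfl fun s _ => by rw [← Finset.sum_neg_distrib]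
      have e4 : (∑ s : Fin n, ∑ r, lam s * symp (v r) (v s) * lam r)
          = ∑ s, ∑ r, lam r * symp (v s) (v r) * lam s := Finset.sum_comm
      have := e1.trans (e2.trans (e3.trans (by rw [e4, ← e1])))
      linarith
    have h2 : mu • y₀ + t₀ ∈ T := by
      have e : mu • y₀ + t₀ = U + (∑ s, lam s • v s)
          - (∑ s, Pl s • (u s + lam s • y₀)) + (∑ s, Pl s * lam s) • y₀ := by
        rw [Finset.sum_congr rfl fun (s : Fin n) _ =>
          (by rw [smul_add, smul_smul] : Pl s • (u s + lam s • y₀)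
            = Pl s • u s + (Pl s * lam s) • y₀)]
        rw [Finset.sum_add_distrib, ← Finset.sum_smul, hU]
        abel
      rw [e, hPllam, zero_smul, add_zero]
      exact Submodule.sub_mem _
        (Submodule.add_mem _ hUT
          (Submodule.sum_mem _ fun s _ => Submodule.smul_mem _ _ (hvT s)))
        (Submodule.sum_mem _ fun s _ => Submodule.smul_mem _ _ (h1 s))
    have h3 : d • t₀ - (1 - mu * d) • y₀ ∈ T := by
      have hsc : (∑ s, b s * lam s) = 1 - mu * d := by linarith [hbez]
      have e : d • t₀ - (1 - mu * d) • y₀ = w₀ - (∑ s, a s • v s)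
          - (∑ s, b s • (u s + lam s • y₀)) := by
        rw [Finset.sum_congr rfl fun (s : Fin n) _ =>
          (by rw [smul_add, smul_smul] : b s • (u s + lam s • y₀)
            = b s • u s + (b s * lam s) • y₀)]
        rw [Finset.sum_add_distrib, ← Finset.sum_smul, hsc, hw₀]
        abel
      rw [e]
      exact Submodule.sub_mem _
        (Submodule.sub_mem _ hwT
          (Submodule.sum_mem _ fun s _ => Submodule.smul_mem _ _ (hvT s)))
        (Submodule.sum_mem _ fun s _ => Submodule.smul_mem _ _ (h1 s))
    have h4 : y₀ ∈ T := by
      have e : y₀ = d • (mu • y₀ + t₀) - (d • t₀ - (1 - mu * d) • y₀) := by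
        rw [smul_add, smul_smul]
        have e2 : (d * mu) • y₀ + d • t₀ - (d • t₀ - (1 - mu * d) • y₀)
            = ((d * mu) + (1 - mu * d)) • y₀ := by rw [add_smul]; abel
        rw [e2]
        have h5 : d * mu + (1 - mu * d) = 1 := by ring
        rw [h5, one_smul]
      rw [e]
      exact Submodule.sub_mem _ (Submodule.smul_mem _ _ h2) h3
    have h6 : ∀ j, u j ∈ T := by
      intro j
      have e : u j = (u j + lam j • y₀) - lam j • y₀ := by abel
      rw [e]
      exact Submodule.sub_mem _ (h1 j) (Submodule.smul_mem _ _ h4)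
    apply sup_le
    · rw [Submodule.span_le]
      rintro z ⟨i, rfl⟩
      exact hvT i
    · rw [Submodule.span_le]
      rintro z ⟨j, rfl⟩
      exact h6 j


theorem append_nil {n : ℕ} {X : Type*} (v : Fin n → X) (w : Fin 0 → X) :
    (Fin.append v w : Fin (n + 0) → X) = v := by
  funext i
  have h : (i : Fin (n + 0)).1 < n := i.isLt
  rw [Fin.append, Fin.addCases, dif_pos h]
  congr

theorem append_succ {n k : ℕ} {X : Type*} (v : Fin n → X) (w : Fin (k + 1) → X) :
    (Fin.append v w : Fin (n + (k + 1)) → X)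
      = Fin.snoc (Fin.append v (Fin.init w)) (w (Fin.last k)) := by
  rw [← Fin.append_snoc, Fin.snoc_init_self]

theorem append_init {n k : ℕ} {X : Type*} (v : Fin n → X) (w : Fin (k + 1) → X) :
    (Fin.append v (Fin.init w) : Fin (n + k) → X)
      = (Fin.append v w : Fin (n + (k + 1)) → X) ∘ Fin.castSucc := by
  funext i
  rw [append_succ v w]
  simp only [Function.comp_apply, Fin.snoc_castSucc]

theorem stmt5_aux (g n : ℕ) (v u : Fin n → Fin (2 * g) → ℤ)
    (hu : IsUnimodular u)
    (huiso : ∀ i j, symp (u i) (u j) = 0)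
    (hdual : ∀ i j, symp (v i) (u j) = if i = j then 1 else 0) :
    ∀ (k : ℕ), n + k ≤ g → ∀ (w : Fin k → Fin (2 * g) → ℤ),
      IsUnimodular (Fin.append v w) →
      ∃ u' : Fin (n + k) → Fin (2 * g) → ℤ,
        IsUnimodular u' ∧
        (∀ i j, symp (u' i) (u' j) = 0) ∧
        (∀ i j, symp (Fin.append v w i) (u' j) = if i = j then 1 else 0) ∧
        Submodule.span ℤ (Set.range v) ⊔ Submodule.span ℤ (Set.range u) ≤
          Submodule.span ℤ (Set.range (Fin.append v w)) ⊔ Submodule.span ℤ (Set.range u') := by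
  intro k
  induction k with
  | zero =>
    intro hg w hvw
    refine ⟨u, hu, huiso, ?_, ?_⟩
    · intro i j
      rw [append_nil v w]
      exact hdual i j
    · rw [append_nil v w]
  | succ k ih =>
    intro hg w hvw
    have hvh : IsUnimodular (Fin.append v (Fin.init w)) := by
      rw [append_init v w]
      exact hvw.comp Fin.castSucc (Fin.castSucc_injective _)
    obtain ⟨u'', h1, h2, h3, h4⟩ := ih (by omega) (Fin.init w) hvh
    have hvw' : IsUnimodular
        (Fin.snoc (Fin.append v (Fin.init w)) (w (Fin.last k)) :
          Fin ((n + k) + 1) → Fin (2 * g) → ℤ) := by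
      rw [← append_succ v w]
      exact hvw
    obtain ⟨u', g1, g2, g3, g4⟩ :=
      stmt5_one g (n + k) (by omega) (Fin.append v (Fin.init w)) u'' h2 h3
        (w (Fin.last k)) hvw'
    refine ⟨u', g1, g2, ?_, ?_⟩
    · intro i j
      rw [append_succ v w]
      exact g3 i j
    · calc Submodule.span ℤ (Set.range v) ⊔ Submodule.span ℤ (Set.range u)
          ≤ Submodule.span ℤ (Set.range (Fin.append v (Fin.init w))) ⊔
            Submodule.span ℤ (Set.range u'') := h4
        _ ≤ _ := by
            rw [append_succ v w]
            exact g4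

/-- extending a dual summand, Prop. 2.11 (ii). -/
theorem stmt5 (g n k : ℕ) (hn : 1 ≤ n) (hk : 1 ≤ k) (hg : n + k ≤ g)
    (v : Fin n → Fin (2 * g) → ℤ) (hv : IsUnimodular v)
    (u : Fin n → Fin (2 * g) → ℤ) (hu : IsUnimodular u)
    (huiso : ∀ i j, symp (u i) (u j) = 0)
    (hdual : ∀ i j, symp (v i) (u j) = if i = j then 1 else 0)
    (w : Fin k → Fin (2 * g) → ℤ)
    (hvw : IsUnimodular (Fin.append v w)) :
    ∃ u' : Fin (n + k) → Fin (2 * g) → ℤ,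
      IsUnimodular u' ∧
      (∀ i j, symp (u' i) (u' j) = 0) ∧
      (∀ i j, symp (Fin.append v w i) (u' j) = if i = j then 1 else 0) ∧
      Submodule.span ℤ (Set.range v) ⊔ Submodule.span ℤ (Set.range u) ≤
        Submodule.span ℤ (Set.range (Fin.append v w)) ⊔ Submodule.span ℤ (Set.range u') :=
  stmt5_aux g n v u hu huiso hdual k hg w hvw

end Paper
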